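/- Suppose ẏ(t) = φ + α·u(t) on the interval [t-L, t] where φ is an unknown real constant, α ≠ 0, L > 0, and u, y are continuous with y differentiable. Then φ is recovered exactly by the integral formula φ = -(6/L³)·∫_{t-L}^{t} ((L - 2σ')·y(t-L+σ') + α·σ'·(L - σ')·u(t-L+σ')) dσ', where σ' = σ - (t-L) is time measured from the start of the window. Equivalently, writing the window as [0, L] with ẏ = φ + αu on [0,L]: φ = -(6/L³)·∫₀^L ((L-2σ)y(σ) + ασ(L-σ)u(σ)) dσ. -/

import Mathlib

theorem phi_estimation_formula
    (y u : ℝ → ℝ) (φ α L : ℝ) (hα : α ≠ 0) (hL : L > 0)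
    (hu : ContinuousOn u (Set.Icc 0 L))
    (hy : ∀ σ ∈ Set.Icc (0:ℝ) L, HasDerivAt y (φ + α * u σ) σ) :
    φ = -(6 / L ^ 3) *
        ∫ σ in (0:ℝ)..L, ((L - 2 * σ) * y σ + α * σ * (L - σ) * u σ) := by
  have huIcc : Set.uIcc (0:ℝ) L = Set.Icc 0 L := Set.uIcc_of_le hL.le
  have hycont : ContinuousOn y (Set.Icc 0 L) := fun x hx =>
    ((hy x hx).continuousAt).continuousWithinAt
  -- integration by parts with w σ = σ * (L - σ)
  have hw : ∀ x ∈ Set.uIcc (0:ℝ) L,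
      HasDerivAt (fun σ : ℝ => σ * (L - σ)) (L - 2 * x) x := by
    intro x _
    have h := (hasDerivAt_id x).mul ((hasDerivAt_const x L).sub (hasDerivAt_id x))
    exact h.congr_deriv (by simp; ring)
  have hibp : (∫ σ in (0:ℝ)..L,
      ((L - 2 * σ) * y σ + σ * (L - σ) * (φ + α * u σ))) =
      L * (L - L) * y L - 0 * (L - 0) * y 0 := by
    apply intervalIntegral.integral_deriv_mul_eq_sub hw
    · intro x hx; exact hy x (huIcc ▸ hx)
    · apply ContinuousOn.intervalIntegrable; rw [huIcc]; fun_prop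
    · apply ContinuousOn.intervalIntegrable; rw [huIcc]
      exact continuousOn_const.add (continuousOn_const.mul hu)
  have hcont1 : ContinuousOn (fun σ => (L - 2 * σ) * y σ + α * σ * (L - σ) * u σ)
      (Set.Icc 0 L) := by fun_prop
  have hsplit : (∫ σ in (0:ℝ)..L,
      ((L - 2 * σ) * y σ + σ * (L - σ) * (φ + α * u σ))) =
      (∫ σ in (0:ℝ)..L, ((L - 2 * σ) * y σ + α * σ * (L - σ) * u σ)) +
      φ * (∫ σ in (0:ℝ)..L, σ * (L - σ)) := by
    rw [← intervalIntegral.integral_const_mul, ← intervalIntegral.integral_add]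
    · apply intervalIntegral.integral_congr
      intro x _; ring
    · apply ContinuousOn.intervalIntegrable; rw [huIcc]; exact hcont1
    · exact (ContinuousOn.intervalIntegrable (by fun_prop))
  have hwint : (∫ σ in (0:ℝ)..L, σ * (L - σ)) = L ^ 3 / 6 := by
    have h : (∫ σ in (0:ℝ)..L, σ * (L - σ)) = ∫ σ in (0:ℝ)..L, (L * σ - σ ^ 2) := by
      apply intervalIntegral.integral_congr; intro x _; ring
    rw [h, intervalIntegral.integral_sub, intervalIntegral.integral_const_mul,
      integral_id, integral_pow]
    · ring
    · exact (ContinuousOn.intervalIntegrable (by fun_prop))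
    · exact (ContinuousOn.intervalIntegrable (by fun_prop))
  have hL3 : L ^ 3 ≠ 0 := pow_ne_zero 3 hL.ne'
  have key : (∫ σ in (0:ℝ)..L, ((L - 2 * σ) * y σ + α * σ * (L - σ) * u σ)) +
      φ * (L ^ 3 / 6) = 0 := by
    rw [← hwint, ← hsplit, hibp]; ring
  have hI : (∫ σ in (0:ℝ)..L, ((L - 2 * σ) * y σ + α * σ * (L - σ) * u σ)) =
      -(φ * (L ^ 3 / 6)) := by linarith
  rw [hI]
  field_simp
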